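/- Pasting is hypothesis decreasing: if τ is a non-empty list of labels and the quadruple (τ, σ, σ', τ') is decreasing, then for every list υ of labels, |σ'| + |υ| ≺_mul |σ| + |τ ++ υ|. -/
import Mathlib


open Relation

universe u v

variable {α : Type u} {β : Type v}

/-- down-set of a set of labels -/
def ds (r : β → β → Prop) (S : Set β) : Set β := {b | ∃ a ∈ S, r b a}

/-- down-set of a multiset of labels -/
def dm (r : β → β → Prop) (M : Multiset β) : Set β := ds r {a | a ∈ M}

/-- down-set of a list of labels -/
def dl (r : β → β → Prop) (σ : List β) : Set β := ds r {a | a ∈ σ}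

/-- `M -s S`: remove from the multiset `M` all occurrences of elements of the set `S` -/
noncomputable def msub (M : Multiset β) (S : Set β) : Multiset β :=
  @Multiset.filter β (fun a => a ∉ S) (Classical.decPred _) M

/-- `M ≼_mul N` -/
def mulLe (r : β → β → Prop) (M N : Multiset β) : Prop :=
  ∃ I J K : Multiset β, M = I + K ∧ N = I + J ∧ ∀ k ∈ K, k ∈ dm r J

/-- `M ≺_mul N`: the multiset extension of `r` -/
def mulLt (r : β → β → Prop) (M N : Multiset β) : Prop :=
  ∃ I J K : Multiset β, M = I + K ∧ N = I + J ∧ (∀ k ∈ K, k ∈ dm r J) ∧ J ≠ 0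

/-- the one-step multiset extension of `r` -/
def mult1 (r : β → β → Prop) (M N : Multiset β) : Prop :=
  ∃ (a : β) (I K : Multiset β), M = I + K ∧ N = I + {a} ∧ ∀ b ∈ K, r b a

/-- the lexicographic maximum measure `|σ|` -/
noncomputable def lexmax (r : β → β → Prop) : List β → Multiset β
  | [] => 0
  | a :: σ => {a} + msub (lexmax r σ) (ds r {a})

/-- the quadruple of label lists `(τ, σ, σ', τ')` is decreasing -/
def Decreasing (r : β → β → Prop) (τ σ σ' τ' : List β) : Prop :=
  mulLe r (lexmax r (σ ++ τ')) (lexmax r τ + lexmax r σ) ∧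
  mulLe r (lexmax r (τ ++ σ')) (lexmax r τ + lexmax r σ)

/-- labeled rewrite sequences of the labeled ARS `B` -/
inductive LSeq (B : α → β → α → Prop) : α → List β → α → Prop
  | nil (a : α) : LSeq B a [] a
  | cons {a b c : α} {l : β} {σ : List β} :
      B a l b → LSeq B b σ c → LSeq B a (l :: σ) c

/-- labeled conversions of the labeled ARS `B` -/
inductive Conv (B : α → β → α → Prop) : α → List β → α → Prop
  | nil (a : α) : Conv B a [] a
  | fwd {a b c : α} {l : β} {σ : List β} :
      B a l b → Conv B b σ c → Conv B a (l :: σ) c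
  | bwd {a b c : α} {l : β} {σ : List β} :
      B b l a → Conv B b σ c → Conv B a (l :: σ) c

/-- the local peak `b ←lb a →lc c` is decreasing with respect to conversions -/
def LDConv (B : α → β → α → Prop) (r : β → β → Prop) (b c : α) (lb lc : β) : Prop :=
  ∃ (d b1 b2 c1 c2 : α) (σ1 σ3 τ1 τ3 : List β),
    Conv B b σ1 b1 ∧ (∀ l ∈ σ1, l ∈ ds r ({lc} : Set β)) ∧
    (b1 = b2 ∨ B b1 lb b2) ∧
    Conv B b2 σ3 d ∧ (∀ l ∈ σ3, l ∈ ds r ({lc, lb} : Set β)) ∧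
    Conv B c τ1 c1 ∧ (∀ l ∈ τ1, l ∈ ds r ({lb} : Set β)) ∧
    (c1 = c2 ∨ B c1 lc c2) ∧
    Conv B c2 τ3 d ∧ (∀ l ∈ τ3, l ∈ ds r ({lc, lb} : Set β))

/-- confluence of an abstract rewrite system -/
def Confluent (A : α → α → Prop) : Prop :=
  ∀ a b c : α, ReflTransGen A a b → ReflTransGen A a c →
    ∃ d, ReflTransGen A b d ∧ ReflTransGen A c d

lemma mem_msub {M : Multiset β} {S : Set β} {a : β} :
    a ∈ msub M S ↔ a ∈ M ∧ a ∉ S := by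
  simp [msub, Multiset.mem_filter]

lemma msub_add (A B : Multiset β) (S : Set β) :
    msub (A + B) S = msub A S + msub B S := by
  classical
  ext x
  simp only [msub, Multiset.count_add, Multiset.count_filter]
  by_cases hx : x ∈ S <;> simp [hx]

lemma msub_msub (M : Multiset β) (S T : Set β) :
    msub (msub M S) T = msub M (S ∪ T) := by
  classical
  ext x
  simp only [msub, Multiset.count_filter]
  by_cases hS : x ∈ S <;> by_cases hT : x ∈ T <;> simp [hS, hT, Set.mem_union]

lemma msub_empty (M : Multiset β) : msub M (∅ : Set β) = M := by
  classical
  ext x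
  simp [msub, Multiset.count_filter]

lemma msub_split (M : Multiset β) (S : Set β) :
    ∃ R, M = msub M S + R ∧ ∀ a ∈ R, a ∈ S := by
  classical
  refine ⟨Multiset.filter (fun a => a ∈ S) M, ?_,
    fun a ha => (Multiset.mem_filter.mp ha).2⟩
  ext x
  simp only [msub, Multiset.count_add, Multiset.count_filter]
  by_cases hx : x ∈ S <;> simp [hx]

lemma dl_nil (r : β → β → Prop) : dl r ([] : List β) = ∅ := by
  ext x; simp [dl, ds]

lemma dl_cons (r : β → β → Prop) (a : β) (τ : List β) :
    dl r (a :: τ) = ds r {a} ∪ dl r τ := by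
  ext x
  simp only [dl, ds, Set.mem_setOf_eq, Set.mem_union, Set.mem_singleton_iff,
    List.mem_cons]
  constructor
  · rintro ⟨b, hb | hb, hr⟩
    · exact Or.inl ⟨b, hb, hr⟩
    · exact Or.inr ⟨b, hb, hr⟩
  · rintro (⟨b, hb, hr⟩ | ⟨b, hb, hr⟩)
    · exact ⟨b, Or.inl hb, hr⟩
    · exact ⟨b, Or.inr hb, hr⟩

lemma lexmax_append (r : β → β → Prop) (τ υ : List β) :
    lexmax r (τ ++ υ) = lexmax r τ + msub (lexmax r υ) (dl r τ) := by
  induction τ with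
  | nil => simp [lexmax, dl_nil, msub_empty]
  | cons a τ ih =>
      show lexmax r (a :: (τ ++ υ)) = _
      rw [lexmax, ih, msub_add, lexmax, msub_msub, dl_cons, Set.union_comm,
        add_assoc]

lemma mem_lexmax_or_dm (r : β → β → Prop) (htrans : Transitive r)
    {a : β} {τ : List β} (ha : a ∈ τ) :
    a ∈ lexmax r τ ∨ ∃ c ∈ lexmax r τ, r a c := by
  induction τ with
  | nil => simp at ha
  | cons b τ ih =>
      rcases List.mem_cons.mp ha with rfl | ha
      · left; simp [lexmax]
      · have hmem : ∀ x, x ∈ lexmax r (b :: τ) ↔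
            x = b ∨ (x ∈ lexmax r τ ∧ x ∉ ds r {b}) := by
          intro x
          simp [lexmax, Multiset.mem_add, mem_msub]
        by_cases hab : r a b
        · right; exact ⟨b, by simp [lexmax], hab⟩
        · rcases ih ha with h1 | ⟨c, hc, hrc⟩
          · left; exact (hmem a).mpr (Or.inr ⟨h1, by
              simp only [ds, Set.mem_setOf_eq, Set.mem_singleton_iff]
              rintro ⟨b', rfl, hr⟩; exact hab hr⟩)
          · by_cases hcb : r c b
            · right
              exact ⟨b, by simp [lexmax], htrans hrc hcb⟩
            · right
              refine ⟨c, (hmem c).mpr (Or.inr ⟨hc, ?_⟩), hrc⟩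
              simp only [ds, Set.mem_setOf_eq, Set.mem_singleton_iff]
              rintro ⟨b', rfl, hr⟩; exact hcb hr

lemma dl_subset_dm_lexmax (r : β → β → Prop) (htrans : Transitive r)
    {x : β} {τ : List β} (hx : x ∈ dl r τ) :
    ∃ c ∈ lexmax r τ, r x c := by
  obtain ⟨a, ha, hr⟩ := hx
  rcases mem_lexmax_or_dm r htrans ha with h1 | ⟨c, hc, hrc⟩
  · exact ⟨a, h1, hr⟩
  · exact ⟨c, hc, htrans hr hrc⟩

lemma lexmax_ne_zero (r : β → β → Prop) {τ : List β} (hτ : τ ≠ []) :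
    lexmax r τ ≠ 0 := by
  cases τ with
  | nil => exact absurd rfl hτ
  | cons a τ =>
      intro h0
      have ha : a ∈ lexmax r (a :: τ) := by
        rw [lexmax]; exact Multiset.mem_add.mpr (Or.inl (Multiset.mem_singleton_self a))
      rw [h0] at ha
      exact Multiset.notMem_zero a ha

lemma madd_eq_zero {A B : Multiset β} (h : A + B = 0) : A = 0 ∧ B = 0 := by
  constructor <;>
    · rw [Multiset.eq_zero_iff_forall_notMem]
      intro x hx
      have : x ∈ A + B := Multiset.mem_add.mpr (by tauto)
      rw [h] at this
      exact Multiset.notMem_zero x this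

lemma riesz (A B C D : Multiset β) (h : A + B = C + D) :
    ∃ X11 X12 X21 X22 : Multiset β,
      A = X11 + X12 ∧ B = X21 + X22 ∧ C = X11 + X21 ∧ D = X12 + X22 := by
  classical
  refine ⟨A ∩ C, A - C, C - A, B - (C - A), ?_, ?_, ?_, ?_⟩ <;>
    · ext x
      have hc := congrArg (Multiset.count x) h
      simp only [Multiset.count_add] at hc
      simp [Multiset.count_add, Multiset.count_sub, Multiset.count_inter]
      omega

lemma mem_dm_mono {r : β → β → Prop} {J J' : Multiset β} {x : β}
    (hJ : ∀ a ∈ J, a ∈ J') (hx : x ∈ dm r J) : x ∈ dm r J' := by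
  obtain ⟨a, ha, hr⟩ := hx
  exact ⟨a, hJ a ha, hr⟩

/-- pasting is hypothesis decreasing -/
theorem pasting_hypothesis_decreasing {β : Type v} (r : β → β → Prop)
    (htrans : Transitive r) (hirrefl : Irreflexive r)
    (τ σ σ' τ' : List β) (hτ : τ ≠ []) (h : Decreasing r τ σ σ' τ') :
    ∀ υ : List β,
      mulLt r (lexmax r σ' + lexmax r υ) (lexmax r σ + lexmax r (τ ++ υ)) := by
  intro υ
  classical
  set D := dl r τ with hD
  obtain ⟨I, J, K, hMK, hNJ, hK⟩ := h.2
  rw [lexmax_append] at hMK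
  -- Riesz decomposition of lexmax τ + msub (lexmax σ') D = I + K
  obtain ⟨I₁, K₁, I₂, K₂, hτdec, hσ'dec, hI, hKdec⟩ := riesz _ _ _ _ hMK
  -- split lexmax σ' and lexmax υ along D
  obtain ⟨Rσ, hσ'split, hRσmem⟩ := msub_split (lexmax r σ') D
  obtain ⟨Rυ, hυsplit, hRυmem⟩ := msub_split (lexmax r υ) D
  refine ⟨I₂ + msub (lexmax r υ) D, I₁ + J, K₂ + (Rσ + Rυ), ?_, ?_, ?_, ?_⟩
  · -- M = I' + K'
    conv_lhs => rw [hσ'split, hυsplit]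
    rw [hσ'dec]
    abel
  · -- N = I' + J'
    rw [lexmax_append r τ υ]
    have : lexmax r σ + lexmax r τ = I + J := by rw [← hNJ]; abel
    calc lexmax r σ + (lexmax r τ + msub (lexmax r υ) D)
        = (lexmax r σ + lexmax r τ) + msub (lexmax r υ) D := by abel
      _ = I + J + msub (lexmax r υ) D := by rw [this]
      _ = I₂ + msub (lexmax r υ) D + (I₁ + J) := by rw [hI]; abel
  · -- all of K' below I₁ + J
    have hJsub : ∀ x ∈ dm r J, x ∈ dm r (I₁ + J) := by
      intro x hx
      exact mem_dm_mono (fun a ha => Multiset.mem_add.mpr (Or.inr ha)) hx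
    have hDsub : ∀ x ∈ D, x ∈ dm r (I₁ + J) := by
      intro x hx
      obtain ⟨c, hc, hrc⟩ := dl_subset_dm_lexmax r htrans hx
      rw [hτdec, Multiset.mem_add] at hc
      rcases hc with hc | hc
      · exact ⟨c, Multiset.mem_add.mpr (Or.inl hc), hrc⟩
      · have hcK : c ∈ K := by rw [hKdec, Multiset.mem_add]; exact Or.inl hc
        obtain ⟨j, hj, hrj⟩ := hK c hcK
        exact ⟨j, Multiset.mem_add.mpr (Or.inr hj), htrans hrc hrj⟩
    intro k hk
    rw [Multiset.mem_add] at hk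
    rcases hk with hk | hk
    · have hkK : k ∈ K := by rw [hKdec, Multiset.mem_add]; exact Or.inr hk
      exact hJsub k (hK k hkK)
    · rw [Multiset.mem_add] at hk
      rcases hk with hk | hk
      · exact hDsub k (hRσmem k hk)
      · exact hDsub k (hRυmem k hk)
  · -- I₁ + J ≠ 0
    intro h0
    have h0 := madd_eq_zero h0
    have hK0 : K = 0 := by
      rw [Multiset.eq_zero_iff_forall_notMem]
      intro k hkK
      obtain ⟨j, hj, -⟩ := hK k hkK
      rw [h0.2] at hj
      exact Multiset.notMem_zero j hj
    have hK₁0 : K₁ = 0 := by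
      have := hKdec; rw [hK0] at this
      exact (madd_eq_zero this.symm).1
    have : lexmax r τ = 0 := by rw [hτdec, h0.1, hK₁0]; simp
    exact lexmax_ne_zero r hτ this
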